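/- For any graph G and integers k1, k2 ≥ 1, γ_gr^t(G × K_{k1,k2}) = 2·γ_gr^t(G), where × denotes the direct product. -/

import Mathlib

open SimpleGraph

/-- A legal open neighborhood sequence in `G`. -/
def IsOpenLegal {α : Type*} (G : SimpleGraph α) (L : List α) : Prop :=
  L.Nodup ∧ ∀ i : Fin L.length, ∃ w, G.Adj (L.get i) w ∧
    ∀ j : Fin L.length, j < i → ¬ G.Adj (L.get j) w

/-- The Grundy total domination number of `G`. -/
noncomputable def grundyT {α : Type*} (G : SimpleGraph α) : ℕ :=
  sSup {n | ∃ L : List α, IsOpenLegal G L ∧ L.length = n}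

/-- A legal closed neighborhood (dominating) sequence in `G`. -/
def IsClosedLegal {α : Type*} (G : SimpleGraph α) (L : List α) : Prop :=
  L.Nodup ∧ ∀ i : Fin L.length, ∃ w, (G.Adj (L.get i) w ∨ L.get i = w) ∧
    ∀ j : Fin L.length, j < i → ¬ (G.Adj (L.get j) w ∨ L.get j = w)

/-- The Grundy domination number of `G`. -/
noncomputable def grundyDom {α : Type*} (G : SimpleGraph α) : ℕ :=
  sSup {n | ∃ L : List α, IsClosedLegal G L ∧ L.length = n}

/-- The direct (tensor) product of simple graphs. -/
def directProd {α β : Type*} (G : SimpleGraph α) (H : SimpleGraph β) : SimpleGraph (α × β) where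
  Adj x y := G.Adj x.1 y.1 ∧ H.Adj x.2 y.2
  symm := ⟨fun _ _ h => ⟨h.1.symm, h.2.symm⟩⟩
  loopless := ⟨fun _ h => G.irrefl h.1⟩

/-- The lexicographic product of simple graphs. -/
def lexProd {α β : Type*} (G : SimpleGraph α) (H : SimpleGraph β) : SimpleGraph (α × β) where
  Adj x y := G.Adj x.1 y.1 ∨ (x.1 = y.1 ∧ H.Adj x.2 y.2)
  symm := by
    constructor
    rintro x y (h | ⟨h1, h2⟩)
    · exact Or.inl h.symm
    · exact Or.inr ⟨h1.symm, h2.symm⟩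
  loopless := by
    constructor
    rintro x (h | ⟨_, h⟩)
    · exact G.irrefl h
    · exact H.irrefl h

/-- The strong product of simple graphs. -/
def strongProd {α β : Type*} (G : SimpleGraph α) (H : SimpleGraph β) : SimpleGraph (α × β) where
  Adj x y := (G.Adj x.1 y.1 ∧ x.2 = y.2) ∨ (x.1 = y.1 ∧ H.Adj x.2 y.2) ∨
    (G.Adj x.1 y.1 ∧ H.Adj x.2 y.2)
  symm := by
    constructor
    rintro x y (⟨h, e⟩ | ⟨e, h⟩ | ⟨h1, h2⟩)
    · exact Or.inl ⟨h.symm, e.symm⟩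
    · exact Or.inr (Or.inl ⟨e.symm, h.symm⟩)
    · exact Or.inr (Or.inr ⟨h1.symm, h2.symm⟩)
  loopless := by
    constructor
    rintro x (⟨h, _⟩ | ⟨_, h⟩ | ⟨h, _⟩)
    · exact G.irrefl h
    · exact H.irrefl h
    · exact G.irrefl h

/-- The minimum number of complete bipartite subgraphs of `G` covering all edges of `G`. -/
noncomputable def bc {α : Type*} (G : SimpleGraph α) : ℕ :=
  sInf {k | ∃ A B : Fin k → Set α,
    (∀ i a b, a ∈ A i → b ∈ B i → G.Adj a b) ∧
    (∀ u v, G.Adj u v → ∃ i, (u ∈ A i ∧ v ∈ B i) ∨ (v ∈ A i ∧ u ∈ B i))}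

/-- `aD G L` is the number of entries of `L` not adjacent to any earlier entry. -/
noncomputable def aD {α : Type*} (G : SimpleGraph α) (L : List α) : ℕ :=
  {i : Fin L.length | ∀ j : Fin L.length, j < i → ¬ G.Adj (L.get j) (L.get i)}.ncard

/-- The vertex cover number of `G`. -/
noncomputable def vertexCoverNum {α : Type*} (G : SimpleGraph α) : ℕ :=
  sInf {n | ∃ S : Finset α, S.card = n ∧ ∀ u v, G.Adj u v → u ∈ S ∨ v ∈ S}

/-- The independence number of `G`. -/
noncomputable def indepNum {α : Type*} (G : SimpleGraph α) : ℕ :=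
  sSup {n | ∃ S : Finset α, S.card = n ∧ ∀ u ∈ S, ∀ v ∈ S, ¬ G.Adj u v}

section AuxGrundy

variable {α : Type*}

lemma isOpenLegal_nil (G : SimpleGraph α) : IsOpenLegal G ([] : List α) :=
  ⟨List.nodup_nil, fun i => i.elim0⟩

lemma grundyT_set_nonempty (G : SimpleGraph α) :
    {n | ∃ L : List α, IsOpenLegal G L ∧ L.length = n}.Nonempty :=
  ⟨0, [], isOpenLegal_nil G, rfl⟩

lemma grundyT_set_bddAbove [Fintype α] (G : SimpleGraph α) :
    BddAbove {n | ∃ L : List α, IsOpenLegal G L ∧ L.length = n} :=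
  ⟨Fintype.card α, fun _ ⟨_, hL, hn⟩ => hn ▸ hL.1.length_le_card⟩

lemma le_grundyT [Fintype α] {G : SimpleGraph α} {L : List α} (h : IsOpenLegal G L) :
    L.length ≤ grundyT G :=
  le_csSup (grundyT_set_bddAbove G) ⟨L, h, rfl⟩

lemma exists_grundyT_list [Fintype α] (G : SimpleGraph α) :
    ∃ L : List α, IsOpenLegal G L ∧ L.length = grundyT G :=
  Nat.sSup_mem (grundyT_set_nonempty G) (grundyT_set_bddAbove G)

lemma Kadj_same_side {k₁ k₂ : ℕ} {x y t : Fin k₁ ⊕ Fin k₂}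
    (h : x.isLeft = y.isLeft)
    (ha : (completeBipartiteGraph (Fin k₁) (Fin k₂)).Adj x t) :
    (completeBipartiteGraph (Fin k₁) (Fin k₂)).Adj y t := by
  cases x <;> cases y <;> cases t <;> simp_all

/-- Projecting a one-sided subsequence of a legal sequence of `G × K_{k₁,k₂}` gives a legal
sequence in `G`. -/
lemma filter_side_legal [Fintype α] {G : SimpleGraph α} {k₁ k₂ : ℕ}
    {L' : List (α × (Fin k₁ ⊕ Fin k₂))}
    (h : IsOpenLegal (directProd G (completeBipartiteGraph (Fin k₁) (Fin k₂))) L')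
    (b : Bool) (s : α × (Fin k₁ ⊕ Fin k₂) → Bool) (hs : ∀ p, s p = true → p.2.isLeft = b) :
    IsOpenLegal G ((L'.filter s).map Prod.fst) := by
  set M : List (α × (Fin k₁ ⊕ Fin k₂)) := L'.filter s with hM
  obtain ⟨f, hf⟩ := List.sublist_iff_exists_fin_orderEmbedding_get_eq.mp
    (List.filter_sublist (p := s) (l := L'))
  have hside : ∀ i : Fin M.length, (M.get i).2.isLeft = b := by
    intro i
    exact hs _ (List.of_mem_filter (by rw [← hM]; exact List.get_mem M i))
  have key : ∀ i : Fin M.length, ∃ w, G.Adj (M.get i).1 w ∧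
      ∀ j : Fin M.length, j < i → ¬ G.Adj (M.get j).1 w := by
    intro i
    obtain ⟨⟨w, t⟩, hadj, hprev⟩ := h.2 (f i)
    rw [← hf i] at hadj
    refine ⟨w, hadj.1, fun j hji hGadj => ?_⟩
    refine hprev (f j) (f.lt_iff_lt.mpr hji) ?_
    rw [← hf j]
    exact ⟨hGadj, Kadj_same_side (by rw [hside j, hside i]) hadj.2⟩
  have hlen : (M.map Prod.fst).length = M.length := List.length_map _
  have hget : ∀ i : Fin (M.map Prod.fst).length,
      (M.map Prod.fst).get i = (M.get (Fin.cast hlen i)).1 := by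
    intro i
    simp [List.get_eq_getElem]
  constructor
  · rw [List.nodup_iff_injective_get]
    intro i j hij
    rw [hget i, hget j] at hij
    by_contra hne
    rcases lt_trichotomy (Fin.cast hlen i) (Fin.cast hlen j) with hlt | heq | hlt
    · obtain ⟨w, hw, hprev⟩ := key (Fin.cast hlen j)
      exact hprev _ hlt (hij ▸ hw)
    · have hv : (Fin.cast hlen i).1 = (Fin.cast hlen j).1 := congrArg Fin.val heq
      exact hne (Fin.ext hv)
    · obtain ⟨w, hw, hprev⟩ := key (Fin.cast hlen i)
      exact hprev _ hlt (hij ▸ hw)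
  · intro i
    obtain ⟨w, hw, hprev⟩ := key (Fin.cast hlen i)
    refine ⟨w, by rw [hget i]; exact hw, fun j hji => ?_⟩
    rw [hget j]
    exact hprev (Fin.cast hlen j) hji


lemma directProd_adj {α β : Type*} {G : SimpleGraph α} {H : SimpleGraph β}
    {x y : α × β} : (directProd G H).Adj x y ↔ G.Adj x.1 y.1 ∧ H.Adj x.2 y.2 := Iff.rfl

lemma doubled_legal {α : Type*} {G : SimpleGraph α} {L : List α} (hL : IsOpenLegal G L)
    {k₁ k₂ : ℕ} (hk₁ : 1 ≤ k₁) (hk₂ : 1 ≤ k₂) :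
    IsOpenLegal (directProd G (completeBipartiteGraph (Fin k₁) (Fin k₂)))
      (L.map (fun v => (v, Sum.inl ⟨0, hk₁⟩)) ++ L.map (fun v => (v, Sum.inr ⟨0, hk₂⟩))) := by
  set a : Fin k₁ := ⟨0, hk₁⟩
  set bb : Fin k₂ := ⟨0, hk₂⟩
  set Lp : List (α × (Fin k₁ ⊕ Fin k₂)) :=
    L.map (fun v => (v, Sum.inl a)) ++ L.map (fun v => (v, Sum.inr bb)) with hLp
  have hl : Lp.length = L.length + L.length := by simp [hLp]
  have hget : ∀ j : Fin Lp.length, ∀ _ : j.1 < L.length + L.length,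
      Lp.get j = if h : j.1 < L.length then (L.get ⟨j.1, h⟩, Sum.inl a)
        else (L.get ⟨j.1 - L.length, by omega⟩, Sum.inr bb) := by
    intro j h2
    simp only [List.get_eq_getElem, hLp, List.getElem_append, List.length_map,
      List.getElem_map]
  constructor
  · refine List.Nodup.append ?_ ?_ ?_
    · exact hL.1.map (fun x y h => (Prod.ext_iff.mp h).1)
    · exact hL.1.map (fun x y h => (Prod.ext_iff.mp h).1)
    · intro p hp hq
      obtain ⟨v, _, rfl⟩ := List.mem_map.mp hp
      obtain ⟨w, _, h2⟩ := List.mem_map.mp hq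
      exact absurd (Prod.ext_iff.mp h2).2 (by simp)
  · intro i
    have hi : i.1 < L.length + L.length := by rw [← hl]; exact i.2
    by_cases c : i.1 < L.length
    · obtain ⟨w, hw, hprev⟩ := hL.2 ⟨i.1, c⟩
      refine ⟨(w, Sum.inr bb), ?_, ?_⟩
      · rw [hget i hi, dif_pos c, directProd_adj]
        exact ⟨hw, by simp⟩
      · intro j hj hadj
        have hj' : j.1 < L.length := lt_trans hj c
        rw [hget j (by omega), dif_pos hj', directProd_adj] at hadj
        exact hprev ⟨j.1, hj'⟩ hj hadj.1
    · have hm : i.1 - L.length < L.length := by omega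
      obtain ⟨w, hw, hprev⟩ := hL.2 ⟨i.1 - L.length, hm⟩
      refine ⟨(w, Sum.inl a), ?_, ?_⟩
      · rw [hget i hi, dif_neg c, directProd_adj]
        exact ⟨hw, by simp⟩
      · intro j hj hadj
        by_cases cj : j.1 < L.length
        · rw [hget j (by omega), dif_pos cj, directProd_adj] at hadj
          simpa using hadj.2
        · rw [hget j (by omega), dif_neg cj, directProd_adj] at hadj
          exact hprev ⟨j.1 - L.length, by omega⟩ (by simp only [Fin.mk_lt_mk]; omega) hadj.1

end AuxGrundy

theorem grundyT_directProd_completeBipartite {α : Type*} [Fintype α]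
    (G : SimpleGraph α) (k₁ k₂ : ℕ) (hk₁ : 1 ≤ k₁) (hk₂ : 1 ≤ k₂) :
    grundyT (directProd G (completeBipartiteGraph (Fin k₁) (Fin k₂))) = 2 * grundyT G := by
  apply le_antisymm
  · obtain ⟨L', hL', hlen'⟩ :=
      exists_grundyT_list (directProd G (completeBipartiteGraph (Fin k₁) (Fin k₂)))
    have hadd : L'.length = (L'.filter fun p => p.2.isLeft).length +
        (L'.filter fun p => !p.2.isLeft).length :=
      List.length_eq_length_filter_add _
    have h1 := le_grundyT (filter_side_legal hL' true (fun p => p.2.isLeft) (fun p hp => hp))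
    have h2 := le_grundyT (filter_side_legal hL' false (fun p => !p.2.isLeft)
      (fun p hp => by simpa using hp))
    rw [List.length_map] at h1 h2
    omega
  · obtain ⟨L, hL, hlen⟩ := exists_grundyT_list G
    have := le_grundyT (doubled_legal hL hk₁ hk₂)
    simp only [List.length_append, List.length_map] at this
    omega
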